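/- Let K be a field and f, g ∈ K((t)). Let π : K((t)) → K((t)) be the K-linear projection onto K[[t]] that replaces all coefficients in negative degrees by 0, and for h ∈ K((t)) let m_h denote the multiplication operator by h. Set u := π ∘ m_f ∘ m_g − m_g ∘ π ∘ m_f. Then there exist integers a ≤ b such that u vanishes on t^b K[[t]] and the image of u is contained in t^a K[[t]]; moreover, for any such a and b, u induces an endomorphism of the finite-dimensional K-vector space t^a K[[t]] / t^b K[[t]], and the trace of this induced endomorphism equals Res(f·g′). -/

import Mathlib

/-- The formal derivative of a Laurent series: the coefficient of `t^n` in `f'` is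
`(n+1)` times the coefficient of `t^(n+1)` in `f`. -/
noncomputable def lder {K : Type*} [Field K] (f : LaurentSeries K) : LaurentSeries K where
  coeff n := (n + 1 : ℤ) • f.coeff (n + 1)
  isPWO_support' := by
    have hmono : Monotone (fun m : ℤ => m - 1) := fun a b hab => by simpa using hab
    have h : (Function.support fun n : ℤ => (n + 1 : ℤ) • f.coeff (n + 1)) ⊆
        (fun m : ℤ => m - 1) '' (Function.support f.coeff) := by
      intro n hn
      refine ⟨n + 1, fun h0 => ?_, by ring⟩
      simp [Function.mem_support, h0] at hn
    exact (f.isPWO_support'.image_of_monotoneOn (hmono.monotoneOn _)).mono h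

/-- Truncation of a Laurent series to nonnegative degrees. -/
noncomputable def trunc {K : Type*} [Field K] (f : LaurentSeries K) : LaurentSeries K where
  coeff m := if 0 ≤ m then f.coeff m else 0
  isPWO_support' := f.isPWO_support'.mono (fun m hm => by
    simp only [Function.mem_support] at hm ⊢
    intro h0
    apply hm
    split_ifs <;> simp [h0])

@[simp] lemma trunc_coeff {K : Type*} [Field K] (f : LaurentSeries K) (m : ℤ) :
    (trunc f).coeff m = if 0 ≤ m then f.coeff m else 0 := rfl

/-- The projection of `K((t))` onto `K[[t]]` replacing all coefficients in negative
degrees by `0`, as a `K`-linear map. -/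
noncomputable def piPlus (K : Type*) [Field K] :
    LaurentSeries K →ₗ[K] LaurentSeries K where
  toFun := trunc
  map_add' f g := by
    apply HahnSeries.ext
    funext m
    simp only [trunc_coeff, HahnSeries.coeff_add]
    split_ifs <;> simp
  map_smul' c f := by
    apply HahnSeries.ext
    funext m
    simp only [trunc_coeff, HahnSeries.coeff_smul, RingHom.id_apply]
    split_ifs <;> simp

/-- Multiplication by a fixed Laurent series, as a `K`-linear operator on `K((t))`. -/
noncomputable def mull {K : Type*} [Field K] (f : LaurentSeries K) :
    LaurentSeries K →ₗ[K] LaurentSeries K where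
  toFun h := f * h
  map_add' a b := mul_add f a b
  map_smul' c a := by
    simp only [RingHom.id_apply, ← HahnSeries.C_mul_eq_smul]
    ring

/-- The lattice `t^a K[[t]] ⊆ K((t))`, as a `K`-subspace. -/
def latticeAbove (K : Type*) [Field K] (a : ℤ) : Submodule K (LaurentSeries K) where
  carrier := {h : LaurentSeries K | ∀ m : ℤ, m < a → h.coeff m = 0}
  add_mem' := by
    intro x y hx hy m hm
    simp [HahnSeries.coeff_add, hx m hm, hy m hm]
  zero_mem' := by intro m hm; simp
  smul_mem' := by
    intro c x hx m hm
    simp [HahnSeries.coeff_smul, hx m hm]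


/-- The standard quotient-by-submodule construction, registered for subspaces of
`K((t))` (instance search struggles to find it unaided here). -/
noncomputable instance latticeQuotient {L : Type*} [Field L]
    (W : Submodule L (LaurentSeries L)) :
    HasQuotient (↥W) (Submodule L ↥W) := Submodule.hasQuotient

section TateAux

variable {K : Type*} [Field K]

open Finset

@[simp] lemma lder_coeff (g : LaurentSeries K) (n : ℤ) :
    (lder g).coeff n = (n + 1 : ℤ) • g.coeff (n + 1) := rfl

@[simp] lemma piPlus_apply (x : LaurentSeries K) : piPlus K x = trunc x := rfl

@[simp] lemma mull_apply (f x : LaurentSeries K) : mull f x = f * x := rfl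

lemma mem_latticeAbove {x : LaurentSeries K} {a : ℤ} :
    x ∈ latticeAbove K a ↔ ∀ m : ℤ, m < a → x.coeff m = 0 := Iff.rfl

/-- Truncation killing coefficients below `c`. -/
noncomputable def truncAt (c : ℤ) (f : LaurentSeries K) : LaurentSeries K where
  coeff m := if c ≤ m then f.coeff m else 0
  isPWO_support' := f.isPWO_support'.mono (fun m hm => by
    simp only [Function.mem_support] at hm ⊢
    intro h0
    apply hm
    split_ifs <;> simp [h0])

@[simp] lemma truncAt_coeff (c : ℤ) (f : LaurentSeries K) (m : ℤ) :
    (truncAt c f).coeff m = if c ≤ m then f.coeff m else 0 := rfl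

lemma lmul_coeff_zero_of (x y : LaurentSeries K) (m : ℤ)
    (h : ∀ i j : ℤ, i + j = m → x.coeff i = 0 ∨ y.coeff j = 0) : (x * y).coeff m = 0 := by
  rw [HahnSeries.coeff_mul]
  refine Finset.sum_eq_zero fun p hp => ?_
  rw [Finset.mem_antidiagonal] at hp
  rcases h p.1 p.2 hp.2.2 with h0 | h0 <;> simp [h0]

lemma lmul_coeff_eq_sum (x y : LaurentSeries K) (n : ℤ) (S : Finset ℤ)
    (hS : ∀ i : ℤ, x.coeff i ≠ 0 → y.coeff (n - i) ≠ 0 → i ∈ S) :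
    (x * y).coeff n = ∑ i ∈ S, x.coeff i * y.coeff (n - i) := by
  classical
  have key : ∑ p ∈ (Finset.antidiagonal x.isPWO_support y.isPWO_support n).filter
        (fun p => x.coeff p.1 * y.coeff p.2 ≠ 0), x.coeff p.1 * y.coeff p.2
      = ∑ i ∈ S.filter (fun i => x.coeff i * y.coeff (n - i) ≠ 0),
        x.coeff i * y.coeff (n - i) := by
    refine Finset.sum_nbij' (fun p => p.1) (fun i => (i, n - i)) ?_ ?_ ?_ ?_ ?_
    · intro p hp
      simp only [Finset.mem_filter, Finset.mem_antidiagonal, HahnSeries.mem_support] at hp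
      obtain ⟨⟨h1, h2, h3⟩, h4⟩ := hp
      have hp2 : p.2 = n - p.1 := by omega
      rw [Finset.mem_filter]
      rw [hp2] at h2 h4
      exact ⟨hS p.1 h1 h2, h4⟩
    · intro i hi
      simp only [Finset.mem_filter] at hi
      have hx : x.coeff i ≠ 0 := fun h0 => hi.2 (by simp [h0])
      have hy : y.coeff (n - i) ≠ 0 := fun h0 => hi.2 (by simp [h0])
      simp only [Finset.mem_filter, Finset.mem_antidiagonal, HahnSeries.mem_support]
      exact ⟨⟨hx, hy, by ring⟩, hi.2⟩
    · intro p hp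
      simp only [Finset.mem_filter, Finset.mem_antidiagonal] at hp
      have hp2 : p.2 = n - p.1 := by omega
      exact Prod.ext rfl hp2.symm
    · intro i _; rfl
    · intro p hp
      simp only [Finset.mem_filter, Finset.mem_antidiagonal] at hp
      have hp2 : p.2 = n - p.1 := by omega
      rw [hp2]
  calc (x * y).coeff n
      = ∑ p ∈ (Finset.antidiagonal x.isPWO_support y.isPWO_support n).filter
          (fun p => x.coeff p.1 * y.coeff p.2 ≠ 0), x.coeff p.1 * y.coeff p.2 := by
        rw [HahnSeries.coeff_mul, Finset.sum_filter_ne_zero]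
    _ = ∑ i ∈ S.filter (fun i => x.coeff i * y.coeff (n - i) ≠ 0),
          x.coeff i * y.coeff (n - i) := key
    _ = ∑ i ∈ S, x.coeff i * y.coeff (n - i) := Finset.sum_filter_ne_zero S

lemma lmul_single_one_coeff (x : LaurentSeries K) (m k : ℤ) :
    (x * HahnSeries.single m (1 : K)).coeff k = x.coeff (k - m) := by
  rw [show k = (k - m) + m by ring, HahnSeries.coeff_mul_single_add, mul_one]
  ring_nf

lemma trunc_mul_single (x : LaurentSeries K) (m : ℤ) :
    trunc (x * HahnSeries.single m (1 : K)) = truncAt (-m) x * HahnSeries.single m 1 := by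
  apply HahnSeries.ext
  funext k
  rw [lmul_single_one_coeff, trunc_coeff, lmul_single_one_coeff, truncAt_coeff]
  by_cases h : (0 : ℤ) ≤ k
  · rw [if_pos h, if_pos (by omega)]
  · rw [if_neg h, if_neg (by omega)]

lemma u_apply_eq {f g : LaurentSeries K} {u : LaurentSeries K →ₗ[K] LaurentSeries K}
    (hu : u = piPlus K ∘ₗ mull f ∘ₗ mull g - mull g ∘ₗ piPlus K ∘ₗ mull f)
    (h : LaurentSeries K) :
    u h = trunc (f * (g * h)) - g * trunc (f * h) := by
  rw [hu]
  simp [LinearMap.sub_apply, LinearMap.comp_apply]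

/-- The map recording the coefficients in `[a, b)` of elements of `t^a K[[t]]`. -/
noncomputable def coeffMap (K : Type*) [Field K] (a b : ℤ) :
    ↥(latticeAbove K a) →ₗ[K] (↥(Finset.Ico a b) → K) where
  toFun x := fun m => (x : LaurentSeries K).coeff ↑m
  map_add' x y := by funext m; simp
  map_smul' c x := by funext m; simp

@[simp] lemma coeffMap_apply (a b : ℤ) (x : ↥(latticeAbove K a)) (m : ↥(Finset.Ico a b)) :
    coeffMap K a b x m = (x : LaurentSeries K).coeff ↑m := rfl

end TateAux


lemma tate_aux {K V ι : Type*} [Field K] [AddCommGroup V] [Module K V]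
    [Fintype ι] [DecidableEq ι]
    (W : Submodule K V) (N : Submodule K ↥W)
    (u : V →ₗ[K] V) (ha : ∀ v : V, u v ∈ W)
    (hbN : ∀ x : ↥W, x ∈ N → u ↑x = 0)
    (Φ : ↥W →ₗ[K] (ι → K)) (hker : LinearMap.ker Φ = N)
    (hsurj : Function.Surjective Φ)
    (xs : ι → ↥W) (hxs : ∀ i, Φ (xs i) = Pi.single i 1)
    (t : K) (ht : ∑ i, Φ ⟨u ↑(xs i), ha _⟩ i = t) :
    FiniteDimensional K (↥W ⧸ N) ∧
    ∃ e : (↥W ⧸ N) →ₗ[K] (↥W ⧸ N),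
      (∀ h : ↥W, e (Submodule.Quotient.mk h) = Submodule.Quotient.mk ⟨u ↑h, ha ↑h⟩) ∧
      LinearMap.trace K (↥W ⧸ N) e = t := by
  let q : (↥W ⧸ N) →ₗ[K] (ι → K) := Submodule.liftQ N Φ (le_of_eq hker.symm)
  have hq : ∀ x : ↥W, q (Submodule.Quotient.mk x) = Φ x := fun x =>
    Submodule.liftQ_apply N Φ x
  have hqinj : Function.Injective q := by
    rw [← LinearMap.ker_eq_bot]
    exact Submodule.ker_liftQ_eq_bot _ _ _ (le_of_eq hker)
  have hqsurj : Function.Surjective q := by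
    intro c
    obtain ⟨x, hx⟩ := hsurj c
    exact ⟨Submodule.Quotient.mk x, by rw [hq]; exact hx⟩
  let φ : (↥W ⧸ N) ≃ₗ[K] (ι → K) := LinearEquiv.ofBijective q ⟨hqinj, hqsurj⟩
  have hφ : ∀ x : ↥W, φ (Submodule.Quotient.mk x) = Φ x := hq
  have hFD : FiniteDimensional K (↥W ⧸ N) := Module.Finite.equiv φ.symm
  refine ⟨hFD, ?_⟩
  let u' : ↥W →ₗ[K] ↥W :=
    LinearMap.codRestrict W (u ∘ₗ W.subtype) (fun x => ha ↑x)
  have hNN : N ≤ N.comap u' := by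
    intro x hx
    rw [Submodule.mem_comap]
    have hz : u' x = 0 := by
      apply Subtype.ext
      exact hbN x hx
    rw [hz]
    exact N.zero_mem
  let e : (↥W ⧸ N) →ₗ[K] (↥W ⧸ N) := Submodule.mapQ N N u' hNN
  have he : ∀ h : ↥W,
      e (Submodule.Quotient.mk h) = Submodule.Quotient.mk ⟨u ↑h, ha ↑h⟩ := by
    intro x
    rw [Submodule.mapQ_apply]
    rfl
  refine ⟨e, he, ?_⟩
  rw [← LinearMap.trace_conj' e φ,
    LinearMap.trace_eq_matrix_trace K (Pi.basisFun K ι), Matrix.trace]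
  rw [← ht]
  apply Finset.sum_congr rfl
  intro m _
  rw [Matrix.diag, LinearMap.toMatrix_apply, Pi.basisFun_repr, Pi.basisFun_apply,
    LinearEquiv.conj_apply]
  simp only [LinearMap.comp_apply, LinearEquiv.coe_coe]
  rw [← hxs m, ← hφ, LinearEquiv.symm_apply_apply, he, hφ]

/-- **Tate's residue formula.**  For `f, g ∈ K((t))` and `π` the projection onto
`K[[t]]`, the operator `u = π∘m_f∘m_g − m_g∘π∘m_f` kills `t^b K[[t]]` and has image
contained in `t^a K[[t]]` for suitable integers `a ≤ b`; and for any such `a ≤ b` the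
trace of the endomorphism induced by `u` on the finite-dimensional `K`-vector space
`t^a K[[t]] / t^b K[[t]]` equals `Res(f·g')`. -/
theorem tate_trace_formula (K : Type*) [Field K] (f g : LaurentSeries K)
    (u : LaurentSeries K →ₗ[K] LaurentSeries K)
    (hu : u = piPlus K ∘ₗ mull f ∘ₗ mull g - mull g ∘ₗ piPlus K ∘ₗ mull f) :
    (∃ a b : ℤ, a ≤ b ∧ (∀ h ∈ latticeAbove K b, u h = 0) ∧
      (∀ h : LaurentSeries K, u h ∈ latticeAbove K a)) ∧
    (∀ a b : ℤ, a ≤ b → (∀ h ∈ latticeAbove K b, u h = 0) →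
      ∀ ha : (∀ h : LaurentSeries K, u h ∈ latticeAbove K a),
        FiniteDimensional K
          (↥(latticeAbove K a) ⧸ (latticeAbove K b).comap (latticeAbove K a).subtype) ∧
        ∃ e : (↥(latticeAbove K a) ⧸
              (latticeAbove K b).comap (latticeAbove K a).subtype) →ₗ[K]
            (↥(latticeAbove K a) ⧸
              (latticeAbove K b).comap (latticeAbove K a).subtype),
          (∀ h : ↥(latticeAbove K a),
            e (Submodule.Quotient.mk h) = Submodule.Quotient.mk ⟨u ↑h, ha ↑h⟩) ∧
          LinearMap.trace K
            (↥(latticeAbove K a) ⧸ (latticeAbove K b).comap (latticeAbove K a).subtype)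
            e = (f * lder g).coeff (-1)) := by
  constructor
  · -- existence of a suitable lattice pair
    refine ⟨min g.order 0, max (max (-f.order) (-f.order - g.order)) (min g.order 0),
      le_max_right _ _, ?_, ?_⟩
    · -- u kills t^b K[[t]]
      intro h hb
      set b0 : ℤ := max (max (-f.order) (-f.order - g.order)) (min g.order 0) with hb0
      have hfh : ∀ k : ℤ, k < 0 → (f * h).coeff k = 0 := by
        intro k hk
        apply lmul_coeff_zero_of
        intro i j hij
        by_contra hc
        push_neg at hc
        have hi := HahnSeries.order_le_of_coeff_ne_zero hc.1
        have hj : b0 ≤ j := le_of_not_gt (fun hlt => hc.2 (hb j hlt))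
        omega
      have hfgh : ∀ k : ℤ, k < 0 → (f * (g * h)).coeff k = 0 := by
        intro k hk
        rw [← mul_assoc]
        apply lmul_coeff_zero_of
        intro i j hij
        by_contra hc
        push_neg at hc
        have hfg : f * g ≠ 0 := HahnSeries.ne_zero_of_coeff_ne_zero hc.1
        have hf : f ≠ 0 := fun h0 => hfg (by simp [h0])
        have hg : g ≠ 0 := fun h0 => hfg (by simp [h0])
        have hofg : (f * g).order = f.order + g.order := HahnSeries.order_mul hf hg
        have hi := HahnSeries.order_le_of_coeff_ne_zero hc.1
        have hj : b0 ≤ j := le_of_not_gt (fun hlt => hc.2 (hb j hlt))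
        omega
      have t1 : trunc (f * h) = f * h := by
        apply HahnSeries.ext
        funext k
        rw [trunc_coeff]
        split_ifs with hk
        · rfl
        · exact (hfh k (by omega)).symm
      have t2 : trunc (f * (g * h)) = f * (g * h) := by
        apply HahnSeries.ext
        funext k
        rw [trunc_coeff]
        split_ifs with hk
        · rfl
        · exact (hfgh k (by omega)).symm
      rw [u_apply_eq hu, t1, t2, sub_eq_zero]
      ring
    · -- image of u lies in t^a K[[t]]
      intro h
      rw [mem_latticeAbove]
      intro m hm
      rw [u_apply_eq hu, HahnSeries.coeff_sub, trunc_coeff, if_neg (by omega)]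
      rw [lmul_coeff_zero_of g (trunc (f * h)) m ?_, sub_zero]
      intro i j hij
      by_contra hc
      push_neg at hc
      have hi := HahnSeries.order_le_of_coeff_ne_zero hc.1
      have hj : (0 : ℤ) ≤ j := by
        by_contra hj
        exact hc.2 (by rw [trunc_coeff, if_neg hj])
      omega
  · -- the trace formula, for any admissible lattice pair
    intro a b hab hb ha
    classical
    -- diagonal coefficient computation
    set S : Finset ℤ := Finset.Icc (min g.order 0) (max (-f.order) 0) with hS
    set c : ℤ → K := fun i => g.coeff i * f.coeff (-i) with hc
    have hSc : ∀ i : ℤ, g.coeff i ≠ 0 → f.coeff (-i) ≠ 0 → i ∈ S := by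
      intro i h1 h2
      have o1 := HahnSeries.order_le_of_coeff_ne_zero h1
      have o2 := HahnSeries.order_le_of_coeff_ne_zero h2
      rw [hS, Finset.mem_Icc]
      omega
    have hd : ∀ m : ℤ, (u (HahnSeries.single m 1)).coeff m =
        (if 0 ≤ m then ∑ i ∈ S, c i else 0) - ∑ i ∈ S, (if i ≤ m then c i else 0) := by
      intro m
      rw [u_apply_eq hu, HahnSeries.coeff_sub]
      congr 1
      · rw [trunc_coeff, show f * (g * HahnSeries.single m 1)
            = (g * f) * HahnSeries.single m 1 by ring, lmul_single_one_coeff, sub_self,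
          lmul_coeff_eq_sum g f 0 S (fun i h1 h2 => hSc i h1 (by simpa using h2))]
        split_ifs with h0
        · apply Finset.sum_congr rfl
          intro i _
          rw [hc, zero_sub]
        · rfl
      · rw [trunc_mul_single, ← mul_assoc, lmul_single_one_coeff, sub_self]
        rw [lmul_coeff_eq_sum g (truncAt (-m) f) 0 S ?_]
        · apply Finset.sum_congr rfl
          intro i _
          rw [zero_sub, truncAt_coeff]
          by_cases h : i ≤ m
          · rw [if_pos (by omega), if_pos h, hc]
          · rw [if_neg (by omega), if_neg h, mul_zero]
        · intro i h1 h2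
          apply hSc i h1
          intro h0
          apply h2
          rw [zero_sub, truncAt_coeff]
          split_ifs with hcnd
          · exact h0
          · rfl
    set A : ℤ := min a (min g.order 0) with hA
    set B : ℤ := max b (max (-f.order) 0) with hB
    have hsum_ext : ∑ m ∈ Finset.Ico a b, (u (HahnSeries.single m 1)).coeff m
        = ∑ m ∈ Finset.Ico A B, (u (HahnSeries.single m 1)).coeff m := by
      apply Finset.sum_subset
      · intro m hm
        rw [Finset.mem_Ico] at hm ⊢
        omega
      · intro m hm hnot
        rw [Finset.mem_Ico] at hm hnot
        by_cases hmb : b ≤ m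
        · have hx : HahnSeries.single m (1 : K) ∈ latticeAbove K b := by
            rw [mem_latticeAbove]
            intro k hk
            rw [HahnSeries.coeff_single, if_neg (by omega)]
          rw [hb _ hx]
          simp
        · exact mem_latticeAbove.mp (ha (HahnSeries.single m 1)) m (by omega)
    have hcount : ∀ i ∈ S,
        (∑ m ∈ Finset.Ico A B, ((if 0 ≤ m then c i else 0) - (if i ≤ m then c i else 0)))
        = (i : K) * c i := by
      intro i hi
      rw [hS, Finset.mem_Icc] at hi
      have hf1 : (Finset.Ico A B).filter (fun m => (0:ℤ) ≤ m) = Finset.Ico 0 B := by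
        ext m
        simp only [Finset.mem_filter, Finset.mem_Ico]
        omega
      have hf2 : (Finset.Ico A B).filter (fun m => i ≤ m) = Finset.Ico i B := by
        ext m
        simp only [Finset.mem_filter, Finset.mem_Ico]
        omega
      rw [Finset.sum_sub_distrib, ← Finset.sum_filter, ← Finset.sum_filter, hf1, hf2,
        Finset.sum_const, Finset.sum_const, Int.card_Ico, Int.card_Ico,
        nsmul_eq_mul, nsmul_eq_mul]
      have n1 : (((B - 0).toNat : ℤ) : K) = (B : K) := by
        rw [Int.toNat_of_nonneg (by omega)]
        push_cast
        ring
      have n2 : (((B - i).toNat : ℤ) : K) = (B : K) - (i : K) := by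
        rw [Int.toNat_of_nonneg (by omega)]
        push_cast
        ring
      push_cast at n1 n2 ⊢
      rw [n1, n2]
      ring
    have hmain : ∑ m ∈ Finset.Ico A B, (u (HahnSeries.single m 1)).coeff m
        = ∑ i ∈ S, (i : K) * c i := by
      have hstep : ∀ m ∈ Finset.Ico A B, (u (HahnSeries.single m 1)).coeff m
          = ∑ i ∈ S, ((if 0 ≤ m then c i else 0) - (if i ≤ m then c i else 0)) := by
        intro m _
        rw [hd m, Finset.sum_sub_distrib]
        congr 1
        split_ifs with h0
        · rfl
        · exact Finset.sum_const_zero.symm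
      rw [Finset.sum_congr rfl hstep, Finset.sum_comm]
      exact Finset.sum_congr rfl hcount
    have hres : (f * lder g).coeff (-1) = ∑ i ∈ S, (i : K) * c i := by
      rw [lmul_coeff_eq_sum f (lder g) (-1) (S.image (fun i => -i)) ?_]
      · rw [Finset.sum_image (fun x _ y _ h => by omega)]
        apply Finset.sum_congr rfl
        intro i _
        rw [lder_coeff, show (-1 : ℤ) - -i + 1 = i by ring, zsmul_eq_mul, hc]
        push_cast
        ring
      · intro k h1 h2
        rw [lder_coeff] at h2
        have hg : g.coeff (-1 - k + 1) ≠ 0 := fun h0 => h2 (by rw [h0, smul_zero])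
        have hgk : g.coeff (-k) ≠ 0 := by rwa [show (-1 : ℤ) - k + 1 = -k by ring] at hg
        have hfk : f.coeff (-(-k)) ≠ 0 := by rwa [neg_neg]
        exact Finset.mem_image.2 ⟨-k, hSc (-k) hgk hfk, by ring⟩
    have key : ∑ m ∈ Finset.Ico a b, (u (HahnSeries.single m 1)).coeff m
        = (f * lder g).coeff (-1) := by
      rw [hsum_ext, hmain, hres]
    -- data for the abstract lemma
    have hker : LinearMap.ker (coeffMap K a b) =
        (latticeAbove K b).comap (latticeAbove K a).subtype := by
      ext x
      simp only [LinearMap.mem_ker, Submodule.mem_comap, Submodule.subtype_apply]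
      constructor
      · intro hx
        rw [mem_latticeAbove]
        intro m hm
        by_cases hma : m < a
        · exact x.2 m hma
        · have hmem : m ∈ Finset.Ico a b := Finset.mem_Ico.2 ⟨by omega, hm⟩
          have := congrFun hx (⟨m, hmem⟩ : ↥(Finset.Ico a b))
          simpa using this
      · intro hx
        funext m
        have hmb : (↑m : ℤ) < b := (Finset.mem_Ico.1 m.2).2
        simpa using hx ↑m hmb
    have hsurj : Function.Surjective (coeffMap K a b) := by
      intro v
      refine ⟨⟨⟨fun m => if hm : a ≤ m ∧ m < b then v ⟨m, Finset.mem_Ico.2 hm⟩ else 0, ?_⟩, ?_⟩, ?_⟩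
      · apply Set.IsPWO.mono (Set.Finite.isPWO (Set.finite_Ico a b))
        intro m hm
        simp only [Function.mem_support] at hm
        by_contra hmem
        simp only [Set.mem_Ico] at hmem
        exact hm (dif_neg (fun hcnd => hmem ⟨hcnd.1, hcnd.2⟩))
      · intro m hm
        exact dif_neg (fun hcnd => absurd hcnd.1 (by omega))
      · funext m
        obtain ⟨m, hm⟩ := m
        have hm' := Finset.mem_Ico.1 hm
        simp only [coeffMap_apply]
        exact dif_pos ⟨hm'.1, hm'.2⟩
    have hxsmem : ∀ m : ↥(Finset.Ico a b),
        HahnSeries.single (↑m : ℤ) (1 : K) ∈ latticeAbove K a := by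
      intro m
      rw [mem_latticeAbove]
      intro k hk
      have hma := (Finset.mem_Ico.mp m.2).1
      rw [HahnSeries.coeff_single, if_neg (by omega)]
    have hbN : ∀ x : ↥(latticeAbove K a),
        x ∈ (latticeAbove K b).comap (latticeAbove K a).subtype → u ↑x = 0 := by
      intro x hx
      exact hb ↑x hx
    have hxs : ∀ m : ↥(Finset.Ico a b),
        coeffMap K a b ⟨HahnSeries.single (↑m : ℤ) (1 : K), hxsmem m⟩ = Pi.single m 1 := by
      intro m
      funext k
      by_cases hkm : k = m
      · subst hkm
        simp [HahnSeries.coeff_single]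
      · have hne : (↑k : ℤ) ≠ ↑m := fun hh => hkm (Subtype.ext hh)
        simp [HahnSeries.coeff_single, hne, Pi.single_eq_of_ne hkm]
    have ht : ∑ m : ↥(Finset.Ico a b),
        coeffMap K a b ⟨u ↑(⟨HahnSeries.single (↑m : ℤ) (1 : K), hxsmem m⟩ :
          ↥(latticeAbove K a)), ha _⟩ m = (f * lder g).coeff (-1) := by
      have hterm : ∀ m : ↥(Finset.Ico a b),
          coeffMap K a b ⟨u ↑(⟨HahnSeries.single (↑m : ℤ) (1 : K), hxsmem m⟩ :
            ↥(latticeAbove K a)), ha _⟩ m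
          = (u (HahnSeries.single (↑m : ℤ) 1)).coeff ↑m := fun m => rfl
      rw [Finset.sum_congr rfl (fun m _ => hterm m),
        Finset.sum_coe_sort (Finset.Ico a b) (fun m => (u (HahnSeries.single m 1)).coeff m)]
      exact key
    exact tate_aux (latticeAbove K a)
      ((latticeAbove K b).comap (latticeAbove K a).subtype) u ha hbN
      (coeffMap K a b) hker hsurj
      (fun m => ⟨HahnSeries.single (↑m : ℤ) (1 : K), hxsmem m⟩) hxs _ ht
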